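/- Let A ∈ ℝ^{m×n}, U ∈ ℝ^{m×k} and V ∈ ℝ^{n×k} have orthonormal columns, S diagonal with positive diagonal, and A V = U S. Suppose also U₁ ∈ ℝ^{m×j}, V₁ ∈ ℝ^{n×j} have orthonormal columns with Uᵀ U₁ = 0 and Vᵀ V₁ = 0, S₁ diagonal, and A_d V₁ = U₁ S₁ where A_d = A − U S Vᵀ. Then the concatenated matrices [U U₁] and [V V₁] have orthonormal columns and A [V V₁] = [U U₁] blkdiag(S, S₁). -/

import Mathlib

open Matrix

/-- Accumulation step: combining a one-sided PSVD A V = U S with a deflated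
one-sided PSVD A_d V₁ = U₁ S₁ (orthogonal to the first) gives the larger
one-sided PSVD A [V V₁] = [U U₁] blkdiag(S, S₁) with orthonormal columns. -/
theorem psvd_accumulation (m n k j : ℕ) (A : Matrix (Fin m) (Fin n) ℝ)
    (U : Matrix (Fin m) (Fin k) ℝ) (V : Matrix (Fin n) (Fin k) ℝ)
    (S : Matrix (Fin k) (Fin k) ℝ)
    (U₁ : Matrix (Fin m) (Fin j) ℝ) (V₁ : Matrix (Fin n) (Fin j) ℝ)
    (S₁ : Matrix (Fin j) (Fin j) ℝ)
    (hU : Uᵀ * U = 1) (hV : Vᵀ * V = 1)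
    (hS : S.IsDiag) (hSpos : ∀ i, 0 < S i i)
    (hAV : A * V = U * S)
    (hU₁ : U₁ᵀ * U₁ = 1) (hV₁ : V₁ᵀ * V₁ = 1)
    (hUU₁ : Uᵀ * U₁ = 0) (hVV₁ : Vᵀ * V₁ = 0)
    (hS₁ : S₁.IsDiag)
    (hAd : (A - U * S * Vᵀ) * V₁ = U₁ * S₁) :
    (fromCols U U₁)ᵀ * fromCols U U₁ = 1 ∧
    (fromCols V V₁)ᵀ * fromCols V V₁ = 1 ∧
    A * fromCols V V₁ = fromCols U U₁ * fromBlocks S 0 0 S₁ := by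
  have hU₁U : U₁ᵀ * U = 0 := by
    have := congrArg Matrix.transpose hUU₁
    simpa [Matrix.transpose_mul] using this
  have hV₁V : V₁ᵀ * V = 0 := by
    have := congrArg Matrix.transpose hVV₁
    simpa [Matrix.transpose_mul] using this
  have hAV₁ : A * V₁ = U₁ * S₁ := by
    have : A * V₁ - U * S * (Vᵀ * V₁) = U₁ * S₁ := by
      rw [← Matrix.mul_assoc, ← Matrix.sub_mul, hAd]
    simpa [hVV₁] using this
  refine ⟨?_, ?_, ?_⟩
  · rw [transpose_fromCols, fromRows_mul_fromCols, hU, hU₁, hUU₁, hU₁U,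
      ← Matrix.fromBlocks_one]
  · rw [transpose_fromCols, fromRows_mul_fromCols, hV, hV₁, hVV₁, hV₁V,
      ← Matrix.fromBlocks_one]
  · rw [mul_fromCols, fromCols_mul_fromBlocks, hAV, hAV₁]
    simp
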